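/- Let G be a weakly connected DAG on labels {0,...,n-1} produced by the DAG indexing algorithm (indexes assigned from n-1 down to 0, each time to an unindexed node whose temporary successor-label set has maximal lexicographic order, where unindexed successors get the current index). Then the resulting labeling satisfies LO(S(v)) ≤ LO(S(v+1)) for all v ∈ {0,...,n-2}, where S(v) is the set of labels of successors of the node labeled v. -/

import Mathlib

open scoped Classical

/-- The sorted sequence of a finite set of naturals, padded with the sentinel `n`. -/
def seqOf (n : ℕ) (S : Finset ℕ) (i : ℕ) : ℕ := (S.sort (· ≤ ·)).getD i n

/-- Strict lexicographic order on finite sets of naturals. -/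
def LOlt (n : ℕ) (S T : Finset ℕ) : Prop :=
  ∃ l : ℕ, (∀ i < l, seqOf n S i = seqOf n T i) ∧ seqOf n S l < seqOf n T l

/-- Non-strict lexicographic order. -/
def LOle (n : ℕ) (S T : Finset ℕ) : Prop := S = T ∨ LOlt n S T

/-- The successor set of `w`: nodes other than `w` reachable from `w` by a nonempty path. -/
noncomputable def succFin {V : Type*} [Fintype V] (A : V → V → Prop) (w : V) : Finset V :=
  Finset.univ.filter (fun x => x ≠ w ∧ Relation.TransGen A w x)

/-- Labels of the successors of `v`. -/
noncomputable def Slab {V : Type*} [Fintype V] {n : ℕ} (A : V → V → Prop) (I : V ≃ Fin n)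
    (v : V) : Finset ℕ :=
  (succFin A v).image (fun u => (I u : ℕ))

/-- Temporary successor-label set at step `s` (unindexed successors get the current
index `s`; indexed successors, i.e. those of label `> s`, keep their label). -/
noncomputable def Stmp {V : Type*} [Fintype V] {n : ℕ} (A : V → V → Prop) (I : V ≃ Fin n)
    (s : ℕ) (v : V) : Finset ℕ :=
  (succFin A v).image (fun u => if s < (I u : ℕ) then (I u : ℕ) else s)

lemma seqOf_mem_or_eq (n : ℕ) (S : Finset ℕ) (i : ℕ) :
    seqOf n S i ∈ S ∨ seqOf n S i = n := by
  unfold seqOf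
  rcases lt_or_ge i (S.sort (· ≤ ·)).length with h | h
  · left
    rw [List.getD_eq_getElem _ _ h]
    exact (Finset.mem_sort _).mp (List.getElem_mem h)
  · right
    exact List.getD_eq_default _ _ h

lemma seqOf_zero_le (n : ℕ) (S : Finset ℕ) {x : ℕ} (hx : x ∈ S) : seqOf n S 0 ≤ x := by
  unfold seqOf
  have hx' : x ∈ S.sort (· ≤ ·) := (Finset.mem_sort _).mpr hx
  obtain ⟨j, hj⟩ := List.mem_iff_get.mp hx'
  have h0 : 0 < (S.sort (· ≤ ·)).length := j.2.trans_le' (Nat.zero_le _)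
  rw [List.getD_eq_getElem _ _ h0]
  have := List.Pairwise.rel_get_of_le (Finset.pairwise_sort S (· ≤ ·))
    (show (⟨0, h0⟩ : Fin _) ≤ j from Fin.mk_le_of_le_val (Nat.zero_le _))
  rw [hj] at this
  simpa [List.get_eq_getElem] using this

/-- Topological property derived from the algorithm: every successor of the node
labeled `s` has label `> s`. -/
lemma topo {V : Type*} [Fintype V] {n : ℕ} (A : V → V → Prop)
    (hacyc : ∀ x, ¬ Relation.TransGen A x x)
    (I : V ≃ Fin n)
    (halg : ∀ s : Fin n, ∀ u : V, (I u : ℕ) ≤ (s : ℕ) →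
      LOle n (Stmp A I (s : ℕ) u) (Stmp A I (s : ℕ) (I.symm s))) :
    ∀ s : Fin n, ∀ x ∈ succFin A (I.symm s), (s : ℕ) < (I x : ℕ) := by
  intro s x hx
  by_contra hle
  push_neg at hle
  -- s is an element of the temporary successor set of the node labeled s
  have hsmem : (s : ℕ) ∈ Stmp A I (s : ℕ) (I.symm s) := by
    refine Finset.mem_image.mpr ⟨x, hx, ?_⟩
    rw [if_neg (not_lt.mpr hle)]
  -- a minimal (w.r.t. reverse reachability) unindexed node
  have hirr : IsIrrefl V (fun a b => Relation.TransGen A b a) := ⟨fun a => hacyc a⟩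
  have htr : IsTrans V (fun a b => Relation.TransGen A b a) :=
    ⟨fun _ _ _ h1 h2 => h2.trans h1⟩
  have wf : WellFounded (fun a b : V => Relation.TransGen A b a) :=
    Finite.wellFounded_of_trans_of_irrefl _
  obtain ⟨u, hu, hmin⟩ := wf.has_min {u : V | (I u : ℕ) ≤ (s : ℕ)}
    ⟨I.symm s, by simp⟩
  -- every element of Stmp s u exceeds s
  have hbig : ∀ t ∈ Stmp A I (s : ℕ) u, (s : ℕ) < t := by
    intro t ht
    obtain ⟨y, hy, rfl⟩ := Finset.mem_image.mp ht
    have hy' : Relation.TransGen A u y := ((Finset.mem_filter.mp hy).2).2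
    have : ¬ (I y : ℕ) ≤ (s : ℕ) := fun hys => hmin y hys hy'
    push_neg at this
    rw [if_pos this]
    exact this
  have h0u : (s : ℕ) < seqOf n (Stmp A I (s : ℕ) u) 0 := by
    rcases seqOf_mem_or_eq n (Stmp A I (s : ℕ) u) 0 with h | h
    · exact hbig _ h
    · rw [h]; exact s.isLt
  have h0w : seqOf n (Stmp A I (s : ℕ) (I.symm s)) 0 ≤ (s : ℕ) :=
    seqOf_zero_le _ _ hsmem
  rcases halg s u hu with heq | ⟨l, heqs, hlt⟩
  · rw [heq] at hbig
    exact absurd (hbig _ hsmem) (lt_irrefl _)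
  · rcases Nat.eq_zero_or_pos l with rfl | hl
    · exact absurd (hlt.trans_le h0w) (not_lt.mpr h0u.le)
    · have := heqs 0 hl
      rw [this] at h0u
      exact absurd (h0u.trans_le h0w) (lt_irrefl _)

theorem stmt13 {V : Type*} [Fintype V] {n : ℕ} (A : V → V → Prop)
    (hacyc : ∀ x, ¬ Relation.TransGen A x x)
    (hwc : ∀ u v : V, Relation.ReflTransGen (fun a b => A a b ∨ A b a) u v)
    (I : V ≃ Fin n)
    (halg : ∀ s : Fin n, ∀ u : V, (I u : ℕ) ≤ (s : ℕ) →
      LOle n (Stmp A I (s : ℕ) u) (Stmp A I (s : ℕ) (I.symm s))) :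
    ∀ k : ℕ, ∀ hk : k + 1 < n,
      LOle n (Slab A I (I.symm ⟨k, Nat.lt_of_succ_lt hk⟩))
             (Slab A I (I.symm ⟨k + 1, hk⟩)) := by
  intro k hk
  set v := I.symm ⟨k, Nat.lt_of_succ_lt hk⟩ with hv
  set w := I.symm ⟨k + 1, hk⟩ with hw
  have htopo := topo A hacyc I halg
  have hSv : Stmp A I (k + 1) v = Slab A I v := by
    unfold Stmp Slab
    apply Finset.image_congr
    intro u hu
    have hku : k < (I u : ℕ) := by
      have := htopo ⟨k, Nat.lt_of_succ_lt hk⟩ u (by rwa [← hv])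
      simpa using this
    dsimp only
    split <;> omega
  have hSw : Stmp A I (k + 1) w = Slab A I w := by
    unfold Stmp Slab
    apply Finset.image_congr
    intro u hu
    have hku : k + 1 < (I u : ℕ) := by
      have := htopo ⟨k + 1, hk⟩ u (by rwa [← hw])
      simpa using this
    dsimp only
    rw [if_pos hku]
  have hvle : (I v : ℕ) ≤ ((⟨k + 1, hk⟩ : Fin n) : ℕ) := by
    rw [hv, Equiv.apply_symm_apply]
    exact Nat.le_succ k
  have := halg ⟨k + 1, hk⟩ v hvle
  rw [← hw] at this
  simpa [hSv, hSw] using this
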